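/- Let ω² = (3+√2)/2, c = (7+2√2)/2, ω = √(ω²), and let B₄ = B(ω,c,c) be the 4×4 real matrix with rows (0,0,1,0), (0,0,0,1), (c,0,0,2ω), (0,c,−2ω,0). Then the characteristic polynomial of B₄ equals X⁴ − X² + (57/4 + 7√2), its four complex eigenvalues are ±√(1/2 ± i√(14 + 7√2)), every eigenvalue has nonzero real part, and at least one eigenvalue has strictly positive real part. Consequently the relative equilibrium of four equal masses at the square central configuration under the Manev potential is spectrally unstable. -/

import Mathlib

open Polynomial

/-- The linearization matrix of the planar system `ẍ = 2ωJẋ + diag(c₁,c₂)x`. -/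
def B (ω c₁ c₂ : ℝ) : Matrix (Fin 4) (Fin 4) ℝ :=
  !![0, 0, 1, 0;
     0, 0, 0, 1;
     c₁, 0, 0, 2*ω;
     0, c₂, -(2*ω), 0]

/-- `ω = √((3+√2)/2)`, the angular speed of the square relative equilibrium under the
Manev potential. -/
noncomputable def ωmsq : ℝ := Real.sqrt ((3 + Real.sqrt 2) / 2)

/-- `c = ω² + λ₆ = (7+2√2)/2`, the entry of the block `B₄ = B(ω,c,c)`. -/
noncomputable def cmsq : ℝ := (7 + 2 * Real.sqrt 2) / 2

/-- `μ₊ = √(1/2 + i√(14+7√2))`, one of the eigenvalues of `B₄`. -/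
noncomputable def μmsqP : ℂ :=
  ((1/2 : ℂ) + (Real.sqrt (14 + 7 * Real.sqrt 2) : ℂ) * Complex.I) ^ (1/2 : ℂ)

/-- `μ₋ = √(1/2 − i√(14+7√2))`, one of the eigenvalues of `B₄`. -/
noncomputable def μmsqM : ℂ :=
  ((1/2 : ℂ) - (Real.sqrt (14 + 7 * Real.sqrt 2) : ℂ) * Complex.I) ^ (1/2 : ℂ)

/-- The characteristic polynomial of `B ω c c`. -/
theorem charpoly_B_aux (ω c : ℝ) :
    (B ω c c).charpoly = X ^ 4 + C (4*ω^2 - 2*c) * X ^ 2 + C (c^2) := by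
  have h3 : ((3 : Fin 4) : ℕ) = 3 := rfl
  rw [B, Matrix.charpoly]
  simp [Matrix.charmatrix, Matrix.det_succ_row_zero, Fin.sum_univ_succ,
    Matrix.one_apply, C_sub, C_mul, C_pow]
  simp [Fin.succAbove, Fin.lt_def, Matrix.diagonal, Fin.ext_iff, h3]
  ring_nf
  rw [show ((2:ℝ[X]) = C 2) from (map_ofNat C 2).symm,
      show ((4:ℝ) = 2^2) from by norm_num, C_pow]
  ring

/-- The real part of the principal square root of a complex number with positive
real part is positive. -/
theorem re_cpow_half_pos {z : ℂ} (hz : 0 < z.re) : 0 < (z ^ (1/2 : ℂ)).re := by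
  have hz0 : z ≠ 0 := fun h => by simp [h] at hz
  rw [Complex.cpow_def_of_ne_zero hz0, Complex.exp_re]
  apply mul_pos (Real.exp_pos _)
  apply Real.cos_pos_of_mem_Ioo
  have harg : |z.arg| < Real.pi / 2 := Complex.abs_arg_lt_pi_div_two_iff.2 (Or.inl hz)
  rw [abs_lt] at harg
  have hpi : 0 < Real.pi := Real.pi_pos
  have him : (Complex.log z * (1/2)).im = z.arg * (1/2) := by
    simp [Complex.mul_im, Complex.log_im]
  rw [him]
  constructor <;> [linarith [harg.1]; linarith [harg.2]]

/-- The block of the linearization at the square relative equilibrium under the Manev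
potential corresponding to the double Hessian eigenvalue `2 + 1/√2` is spectrally
unstable. -/
theorem B₄_square_manev_unstable :
    (B ωmsq cmsq cmsq).charpoly =
      X ^ 4 - X ^ 2 + C (57/4 + 7 * Real.sqrt 2) ∧
    ((B ωmsq cmsq cmsq).map (Complex.ofReal)).charpoly =
      (X - C μmsqP) * (X + C μmsqP) * (X - C μmsqM) * (X + C μmsqM) ∧
    (∀ μ : ℂ,
      (((B ωmsq cmsq cmsq).map (Complex.ofReal)).charpoly).IsRoot μ → μ.re ≠ 0) ∧
    (∃ μ : ℂ,
      (((B ωmsq cmsq cmsq).map (Complex.ofReal)).charpoly).IsRoot μ ∧ 0 < μ.re) := by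
  set r := Real.sqrt 2 with hr_def
  have hr : r ^ 2 = 2 := Real.sq_sqrt (by norm_num)
  have hr0 : (0:ℝ) ≤ r := Real.sqrt_nonneg 2
  set s := Real.sqrt (14 + 7 * Real.sqrt 2) with hs_def
  have hs0 : (0:ℝ) ≤ s := Real.sqrt_nonneg _
  have hs : s ^ 2 = 14 + 7 * r := Real.sq_sqrt (by positivity)
  have hω : ωmsq ^ 2 = (3 + r) / 2 := Real.sq_sqrt (by positivity)
  have h1 : 4 * ωmsq ^ 2 - 2 * cmsq = -1 := by rw [hω, cmsq]; ring
  have h2 : cmsq ^ 2 = 57/4 + 7 * r := by rw [cmsq]; linear_combination hr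
  -- Part 1
  have part1 : (B ωmsq cmsq cmsq).charpoly =
      X ^ 4 - X ^ 2 + C (57/4 + 7 * Real.sqrt 2) := by
    rw [charpoly_B_aux, h1, h2, ← hr_def]
    simp only [map_neg, map_one]
    ring
  refine ⟨part1, ?_⟩
  -- squares of the eigenvalues
  have hP : μmsqP ^ 2 = (1/2 : ℂ) + (s : ℂ) * Complex.I := by
    rw [μmsqP, show ((1:ℂ)/2 = (2:ℂ)⁻¹) from one_div 2, ← hs_def]
    exact Complex.cpow_ofNat_inv_pow _ 2
  have hM : μmsqM ^ 2 = (1/2 : ℂ) - (s : ℂ) * Complex.I := by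
    rw [μmsqM, show ((1:ℂ)/2 = (2:ℂ)⁻¹) from one_div 2, ← hs_def]
    exact Complex.cpow_ofNat_inv_pow _ 2
  have hs' : ((s : ℂ)) ^ 2 = 14 + 7 * (r : ℂ) := by
    rw [← Complex.ofReal_pow, hs]; push_cast; ring
  have hsum : μmsqP ^ 2 + μmsqM ^ 2 = 1 := by rw [hP, hM]; ring
  have hprod : μmsqP ^ 2 * μmsqM ^ 2 = ((57/4 + 7 * Real.sqrt 2 : ℝ) : ℂ) := by
    rw [hP, hM, ← hr_def]
    push_cast
    linear_combination hs' - (s:ℂ)^2 * Complex.I_sq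
  -- Part 2
  have part2 : ((B ωmsq cmsq cmsq).map (Complex.ofReal)).charpoly =
      (X - C μmsqP) * (X + C μmsqP) * (X - C μmsqM) * (X + C μmsqM) := by
    have hfac : (X - C μmsqP) * (X + C μmsqP) * (X - C μmsqM) * (X + C μmsqM) =
        X ^ 4 - C (μmsqP ^ 2 + μmsqM ^ 2) * X ^ 2 + C (μmsqP ^ 2 * μmsqM ^ 2) := by
      simp only [C_add, C_mul, C_pow]
      ring
    rw [hfac, hsum, hprod, map_one, one_mul]
    have := Matrix.charpoly_map (B ωmsq cmsq cmsq) Complex.ofRealHom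
    rw [show ((B ωmsq cmsq cmsq).map Complex.ofReal) =
        (B ωmsq cmsq cmsq).map Complex.ofRealHom from rfl, this, part1]
    simp [Polynomial.map_pow]
  refine ⟨part2, ?_⟩
  -- positivity of real parts
  have hPre : 0 < μmsqP.re := by
    apply re_cpow_half_pos
    simp [← hs_def]
  have hMre : 0 < μmsqM.re := by
    apply re_cpow_half_pos
    simp [← hs_def, Complex.sub_re]
  constructor
  · intro μ hμ
    rw [part2] at hμ
    simp only [IsRoot, eval_mul, eval_sub, eval_add, eval_X, eval_C, mul_eq_zero,
      sub_eq_zero, add_eq_zero_iff_eq_neg] at hμ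
    rcases hμ with ((h | h) | h) | h
    · rw [h]; exact ne_of_gt hPre
    · rw [h]; simp only [Complex.neg_re]; exact neg_ne_zero.2 (ne_of_gt hPre)
    · rw [h]; exact ne_of_gt hMre
    · rw [h]; simp only [Complex.neg_re]; exact neg_ne_zero.2 (ne_of_gt hMre)
  · exact ⟨μmsqP, by rw [part2]; simp [IsRoot], hPre⟩
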